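/- Let U ⊆ ℂ be a nonempty bounded open set, x ∈ U, and suppose closedBall(y, ε) (with ε > 0) is a closed ball of maximal radius among all closed balls contained in closure(U) and containing x, i.e., x ∈ closedBall(y, ε) ⊆ closure(U) and for every y', ε' with x ∈ closedBall(y', ε') ⊆ closure(U) one has ε' ≤ ε. Then the sphere S = {w : |w − y| = ε} intersects the frontier of U in at least two points. -/

import Mathlib

/-- A closed ball of maximal radius among those containing `x` and contained
in `closure U` meets the frontier of `U` in at least two points. -/
theorem maximal_ball_sphere_meets_frontier_twice (U : Set ℂ) (hU : IsOpen U)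
    (hUb : Bornology.IsBounded U) (hUne : U.Nonempty) (x y : ℂ) (ε : ℝ) (hε : 0 < ε)
    (hx : x ∈ U)
    (hxB : x ∈ Metric.closedBall y ε) (hBU : Metric.closedBall y ε ⊆ closure U)
    (hmax : ∀ (y' : ℂ) (ε' : ℝ), x ∈ Metric.closedBall y' ε' →
      Metric.closedBall y' ε' ⊆ closure U → ε' ≤ ε) :
    ∃ a b : ℂ, a ≠ b ∧ a ∈ Metric.sphere y ε ∩ frontier U ∧
      b ∈ Metric.sphere y ε ∩ frontier U := by
  by_contra hcon
  push_neg at hcon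
  -- sphere points not on the frontier lie in U
  have hsm : ∀ z ∈ Metric.sphere y ε, z ∉ frontier U → z ∈ U := by
    intro z hz hzf
    have hzc : z ∈ closure U := hBU (Metric.sphere_subset_closedBall hz)
    by_contra hzU
    exact hzf (by rw [hU.frontier_eq]; exact ⟨hzc, hzU⟩)
  -- find a point a on the sphere, different from x, s.t. sphere \ {a} ⊆ U
  obtain ⟨a, ha, hax, haU⟩ : ∃ a, a ∈ Metric.sphere y ε ∧ a ≠ x ∧
      ∀ z ∈ Metric.sphere y ε, z ≠ a → z ∈ U := by
    by_cases he : (Metric.sphere y ε ∩ frontier U).Nonempty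
    · obtain ⟨a, haa⟩ := he
      refine ⟨a, haa.1, ?_, ?_⟩
      · rintro rfl
        rw [hU.frontier_eq] at haa
        exact haa.2.2 hx
      · intro z hz hza
        refine hsm z hz (fun hf => hza ?_)
        by_contra hne
        exact hcon z a hne ⟨hz, hf⟩ haa
    · -- sphere ∩ frontier is empty; pick any sphere point ≠ x
      have hall : ∀ z ∈ Metric.sphere y ε, z ∈ U := by
        intro z hz
        refine hsm z hz (fun hf => he ⟨z, hz, hf⟩)
      have h1 : (y + ε : ℂ) ∈ Metric.sphere y ε := by
        simp [Complex.dist_eq, Complex.norm_real, abs_of_pos hε]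
      have h2 : (y - ε : ℂ) ∈ Metric.sphere y ε := by
        simp [Complex.dist_eq, Complex.norm_real, abs_of_pos hε]
      by_cases hxe : (y + ε : ℂ) = x
      · refine ⟨y - ε, h2, ?_, fun z hz _ => hall z hz⟩
        rw [← hxe]
        intro hcontra
        have hε0 : (ε : ℂ) = 0 := by linear_combination -hcontra/2
        rw [Complex.ofReal_eq_zero] at hε0
        exact hε.ne' hε0
      · exact ⟨y + ε, h1, hxe, fun z hz _ => hall z hz⟩
  -- Set up quantities
  set c : ℝ := ‖x - a‖ with hc_def
  have hc : 0 < c := by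
    simp only [hc_def, norm_pos_iff, sub_ne_zero]
    exact fun h => hax h.symm
  have ha' : ‖a - y‖ = ε := by
    rw [Metric.mem_sphere, Complex.dist_eq] at ha
    simpa using ha
  have hxy : ‖x - y‖ ≤ ε := by
    rw [Metric.mem_closedBall, Complex.dist_eq] at hxB
    simpa using hxB
  -- key inner product bound : ⟪x - a, a - y⟫ ≤ -c^2/2
  have hkey : (inner ℝ (x - a) (a - y) : ℝ) ≤ -c^2/2 := by
    have hexp : ‖(x - a) + (a - y)‖^2 = c^2 + 2*(inner ℝ (x - a) (a - y) : ℝ) + ε^2 := by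
      rw [norm_add_sq_real, ha']
    have : ‖(x - a) + (a - y)‖^2 ≤ ε^2 := by
      have h1 : (x - a) + (a - y) = x - y := by ring
      rw [h1]
      exact pow_le_pow_left₀ (norm_nonneg _) hxy 2
    nlinarith
  have hc2e : c ≤ 2*ε := by
    calc c = ‖(x - y) + (y - a)‖ := by rw [hc_def]; ring_nf
    _ ≤ ‖x - y‖ + ‖y - a‖ := norm_add_le _ _
    _ ≤ ε + ε := by
        have : ‖y - a‖ = ε := by rw [← ha', norm_sub_rev]
        linarith [this.le, hxy]
    _ = 2*ε := by ring
  -- direction v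
  set v : ℂ := (c⁻¹ : ℝ) • (x - a) with hv_def
  have hvn : ‖v‖ = 1 := by
    rw [hv_def, norm_smul, Real.norm_eq_abs, abs_of_pos (inv_pos.mpr hc), ← hc_def]
    exact inv_mul_cancel₀ hc.ne' 
  -- Claim A : x stays in shifted ball of radius ε
  have claimA : ∀ t : ℝ, 0 ≤ t → t ≤ c → ‖x - (y + t • v)‖ ≤ ε := by
    intro t ht htc
    have hdecomp : x - (y + t • v) = (1 - t/c) • (x - a) + (a - y) := by
      rw [hv_def, smul_smul]
      match_scalars <;> field_simp <;> ring
    have hsq : ‖x - (y + t • v)‖^2 ≤ ε^2 := by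
      rw [hdecomp, norm_add_sq_real, real_inner_smul_left, norm_smul, Real.norm_eq_abs]
      have hμ0 : 0 ≤ 1 - t/c := by
        rw [sub_nonneg, div_le_one hc]; exact htc
      have hμ1 : 1 - t/c ≤ 1 := by
        have : 0 ≤ t/c := div_nonneg ht hc.le
        linarith
      rw [abs_of_nonneg hμ0, ha', ← hc_def]
      nlinarith [mul_le_mul_of_nonneg_left hkey hμ0,
        mul_le_mul_of_nonneg_right (mul_le_mul_of_nonneg_left hμ1 hμ0) (sq_nonneg c)]
    have := le_of_pow_le_pow_left₀ two_ne_zero hε.le hsq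
    exact this
  -- Claim B : points near a in the enlarged shifted ball are in the original ball
  have claimB : ∀ t : ℝ, 0 < t → t ≤ c → ∀ w : ℂ, ‖w - a‖ ≤ c/4 →
      ‖w - (y + t • v)‖ ≤ ε + t*c/(8*ε) → ‖w - y‖ ≤ ε := by
    intro t ht htc w hwa hwb
    set s : ℝ := t*c/(8*ε) with hs_def
    have hs : 0 < s := by positivity
    have hst : s ≤ t/4 := by
      rw [hs_def, div_le_div_iff₀ (by positivity) (by norm_num)]
      nlinarith
    have hdecomp : w - (y + t • v) = (w - y) - (t/c : ℝ) • (x - a) := by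
      rw [hv_def, smul_smul]
      match_scalars <;> field_simp <;> ring
    have hsq1 : ‖w - (y + t • v)‖^2 ≤ (ε + s)^2 := by
      have : 0 ≤ ε + s := by positivity
      exact pow_le_pow_left₀ (norm_nonneg _) hwb 2
    rw [hdecomp] at hsq1
    rw [norm_sub_sq_real, real_inner_smul_right, norm_smul, Real.norm_eq_abs,
      abs_of_pos (div_pos ht hc)] at hsq1
    -- split ⟪w - y, x - a⟫ = ⟪w - a, x - a⟫ + ⟪a - y, x - a⟫
    have hsplit : (inner ℝ (w - y) (x - a) : ℝ) =
        (inner ℝ (w - a) (x - a) : ℝ) + (inner ℝ (a - y) (x - a) : ℝ) := by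
      have : (w - y : ℂ) = (w - a) + (a - y) := by ring
      rw [this, inner_add_left]
    have hCS : (inner ℝ (w - a) (x - a) : ℝ) ≤ (c/4) * c := by
      calc (inner ℝ (w - a) (x - a) : ℝ) ≤ ‖w - a‖ * ‖x - a‖ := real_inner_le_norm _ _
      _ ≤ (c/4) * c := by
          apply mul_le_mul hwa le_rfl (norm_nonneg _) (by positivity)
    have hay : (inner ℝ (a - y) (x - a) : ℝ) ≤ -c^2/2 := by
      rw [real_inner_comm]; exact hkey
    have hgoal : ‖w - y‖^2 ≤ ε^2 := by
      rw [hsplit, ← hc_def] at hsq1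
      have hτ0 : (0:ℝ) ≤ t/c := le_of_lt (div_pos ht hc)
      have hτc : t/c*c = t := div_mul_cancel₀ t hc.ne'
      have hsε : 2*ε*s = t*c/4 := by rw [hs_def]; field_simp; ring
      nlinarith [mul_le_mul_of_nonneg_left hCS hτ0, mul_le_mul_of_nonneg_left hay hτ0,
        sq_nonneg s, hs.le, sq_nonneg (t/c*c)]
    exact le_of_pow_le_pow_left₀ two_ne_zero hε.le hgoal
  -- compact set away from a on the sphere, inside U
  set K : Set ℂ := Metric.sphere y ε ∩ {z | c/8 ≤ ‖z - a‖} with hK_def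
  have hKcomp : IsCompact K := by
    apply (isCompact_sphere y ε).inter_right
    have : {z : ℂ | c/8 ≤ ‖z - a‖} = (fun z => ‖z - a‖) ⁻¹' (Set.Ici (c/8)) := rfl
    rw [this]
    exact IsClosed.preimage ((continuous_sub_right a).norm) isClosed_Ici
  have hKU : K ⊆ U := by
    rintro z ⟨hz1, hz2⟩
    apply haU z hz1
    intro hza
    rw [hza] at hz2
    simp at hz2
    linarith
  obtain ⟨δ, hδ, hδU⟩ := hKcomp.exists_thickening_subset_open hU hKU
  -- choose t
  set t : ℝ := min (c/16) (δ/4) with ht_def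
  have ht : 0 < t := lt_min (by positivity) (by positivity)
  have htc16 : t ≤ c/16 := min_le_left _ _
  have htδ : t ≤ δ/4 := min_le_right _ _
  have htc : t ≤ c := by linarith
  set s : ℝ := t*c/(8*ε) with hs_def
  have hs : 0 < s := by positivity
  have hst : s ≤ t/4 := by
    rw [hs_def, div_le_div_iff₀ (by positivity) (by norm_num)]
    nlinarith
  -- the enlarged shifted ball is inside closure U
  have hbig : Metric.closedBall (y + t • v) (ε + s) ⊆ closure U := by
    intro w hw
    rw [Metric.mem_closedBall, Complex.dist_eq] at hw
    have hw' : ‖w - (y + t • v)‖ ≤ ε + s := by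
      simpa using hw
    by_cases hwy : ‖w - y‖ ≤ ε
    · apply hBU
      rw [Metric.mem_closedBall, Complex.dist_eq]
      simpa using hwy
    · push_neg at hwy
      by_cases hwa : ‖w - a‖ ≤ c/4
      · exact absurd (claimB t ht htc w hwa hw') (not_le.mpr hwy)
      · push_neg at hwa
        -- w is near the sphere, far from a : use thickening of K
        apply subset_closure
        apply hδU
        set r : ℝ := ‖w - y‖ with hr_def
        have hrε : ε < r := hwy
        have hr0 : 0 < r := lt_trans hε hrε
        set p : ℂ := y + (ε/r : ℝ) • (w - y) with hp_def
        have hpy : ‖p - y‖ = ε := by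
          rw [hp_def, add_sub_cancel_left, norm_smul, Real.norm_eq_abs,
            abs_of_pos (by positivity : (0:ℝ) < ε/r), ← hr_def]
          field_simp
        have hwp : ‖w - p‖ = r - ε := by
          rw [hp_def]
          have : w - (y + (ε/r : ℝ) • (w - y)) = ((1 - ε/r : ℝ)) • (w - y) := by
            match_scalars <;> ring
          rw [this, norm_smul, Real.norm_eq_abs]
          have h1r : 0 ≤ 1 - ε/r := by
            rw [sub_nonneg, div_le_one hr0]; exact hrε.le
          rw [abs_of_nonneg h1r, ← hr_def]
          field_simp
        have hrbound : r ≤ ε + s + t := by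
          calc r = ‖(w - (y + t • v)) + (t • v)‖ := by rw [hr_def]; congr 1; ring
          _ ≤ ‖w - (y + t • v)‖ + ‖t • v‖ := norm_add_le _ _
          _ ≤ (ε + s) + t := by
              have : ‖t • v‖ = t := by
                rw [norm_smul, Real.norm_eq_abs, abs_of_pos ht, hvn, mul_one]
              rw [this]
              linarith
        have hwp2 : ‖w - p‖ ≤ s + t := by rw [hwp]; linarith
        have hpa : c/8 ≤ ‖p - a‖ := by
          have : ‖w - a‖ ≤ ‖w - p‖ + ‖p - a‖ := by
            calc ‖w - a‖ = ‖(w - p) + (p - a)‖ := by congr 1; ring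
            _ ≤ _ := norm_add_le _ _
          have hst2 : s + t ≤ c/8 := by linarith
          linarith
        have hpK : p ∈ K := by
          constructor
          · rw [Metric.mem_sphere, Complex.dist_eq]
            simpa using hpy
          · exact hpa
        rw [Metric.mem_thickening_iff]
        refine ⟨p, hpK, ?_⟩
        rw [Complex.dist_eq]
        have : ‖w - p‖ = ‖w - p‖ := rfl
        rw [this]
        calc ‖w - p‖ ≤ s + t := hwp2
        _ < δ := by linarith
  -- x is in the enlarged shifted ball
  have hxin : x ∈ Metric.closedBall (y + t • v) (ε + s) := by
    rw [Metric.mem_closedBall, Complex.dist_eq]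
    have := claimA t ht.le htc
    have h2 : ‖x - (y + t • v)‖ = ‖x - (y + t • v)‖ := rfl
    rw [h2]
    linarith
  -- contradiction with maximality
  have := hmax (y + t • v) (ε + s) hxin hbig
  linarith
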